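/- arXiv:2305.00203 — 2 statements merged into one kernel-verified Lean document; each statement's English description precedes it below -/
import Mathlib

section
/- Assume additionally that A₁, …, A_q are positive semidefinite. Let (x_l, y_l, z_l)_{l ≥ 0} be a BCD sequence and suppose that some subsequence of (x_l, y_l, z_l)_{l ≥ 1} converges to (x*, y*, z*). Then (x*, y*, z*) is a saddle point, i.e., x* ∈ X, y* ∈ Y, and q_ρ(x*, y*, z*) ≤ q_ρ(x, y*, z*) for all x ∈ X, q_ρ(x*, y*, z*) ≤ q_ρ(x*, y, z*) for all y ∈ Y, and q_ρ(x*, y*, z*) ≤ q_ρ(x*, y*, z) for all z ∈ ℝ^n. -/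
open Matrix Finset Filter Topology

/-- Squared Euclidean norm on `ℝ^n`. -/
noncomputable def sqnorm {n : ℕ} (x : Fin n → ℝ) : ℝ := ∑ i, x i ^ 2

/-- Euclidean norm on `ℝ^n`. -/
noncomputable def enorm {n : ℕ} (x : Fin n → ℝ) : ℝ := Real.sqrt (sqnorm x)

/-- Quadratic form `xᵀ A x`. -/
noncomputable def qf {n : ℕ} (A : Matrix (Fin n) (Fin n) ℝ) (x : Fin n → ℝ) : ℝ :=
  x ⬝ᵥ A.mulVec x

/-- The penalized objective
`q_ρ(x,y,z) = α xᵀA₁x + γ Σ_{i=2}^{q} (zᵀA_i z)(xᵀA_i x) + ρ(‖x−y‖² + ‖x−z‖²)`. -/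
noncomputable def qrho {n : ℕ} (q : ℕ) (A : ℕ → Matrix (Fin n) (Fin n) ℝ)
    (α γ ρ : ℝ) (x y z : Fin n → ℝ) : ℝ :=
  α * qf (A 1) x + γ * ∑ i ∈ Finset.Icc 2 q, qf (A i) z * qf (A i) x
    + ρ * (sqnorm (x - y) + sqnorm (x - z))

/-- Smallest eigenvalue of a real matrix: the infimum of the set of `μ` such that
`A - μ I` is singular. -/
noncomputable def smallestEigenvalue {n : ℕ} (A : Matrix (Fin n) (Fin n) ℝ) : ℝ :=
  sInf {μ : ℝ | ¬ IsUnit (A - μ • (1 : Matrix (Fin n) (Fin n) ℝ))}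

/-- Largest eigenvalue of a real matrix: the supremum of the set of `μ` such that
`A - μ I` is singular. -/
noncomputable def largestEigenvalue {n : ℕ} (A : Matrix (Fin n) (Fin n) ℝ) : ℝ :=
  sSup {μ : ℝ | ¬ IsUnit (A - μ • (1 : Matrix (Fin n) (Fin n) ℝ))}

/-- Coordinate projection `x_L`: keeps the coordinates in `L`, zeroes the others. -/
noncomputable def proj {n : ℕ} (L : Finset (Fin n)) (x : Fin n → ℝ) : Fin n → ℝ :=
  fun i => if i ∈ L then x i else 0


/-- The part of `qrho` not involving `y`. -/
noncomputable def aux_qbase {n : ℕ} (q : ℕ) (A : ℕ → Matrix (Fin n) (Fin n) ℝ)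
    (α γ ρ : ℝ) (x z : Fin n → ℝ) : ℝ :=
  α * qf (A 1) x + γ * ∑ i ∈ Finset.Icc 2 q, qf (A i) z * qf (A i) x
    + ρ * sqnorm (x - z)

lemma aux_qrho_decomp {n : ℕ} (q : ℕ) (A : ℕ → Matrix (Fin n) (Fin n) ℝ)
    (α γ ρ : ℝ) (x y z : Fin n → ℝ) :
    qrho q A α γ ρ x y z = aux_qbase q A α γ ρ x z + ρ * sqnorm (x - y) := by
  unfold qrho aux_qbase; ring

lemma aux_cont_qf {n : ℕ} (A : Matrix (Fin n) (Fin n) ℝ) : Continuous (qf A) := by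
  unfold qf Matrix.mulVec dotProduct
  continuity

lemma aux_cont_sqnorm {n : ℕ} : Continuous (sqnorm (n := n)) := by
  unfold sqnorm; continuity

lemma aux_cont_enorm {n : ℕ} : Continuous (enorm (n := n)) :=
  Real.continuous_sqrt.comp aux_cont_sqnorm

lemma aux_sqnorm_nonneg {n : ℕ} (x : Fin n → ℝ) : 0 ≤ sqnorm x :=
  Finset.sum_nonneg fun i _ => sq_nonneg _

lemma aux_qf_nonneg {n : ℕ} {M : Matrix (Fin n) (Fin n) ℝ} (h : M.PosSemidef)
    (v : Fin n → ℝ) : 0 ≤ qf M v := by simpa [qf] using h.dotProduct_mulVec_nonneg v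

lemma aux_tendsto_qf {n : ℕ} (M : Matrix (Fin n) (Fin n) ℝ) {f : ℕ → Fin n → ℝ}
    {a : Fin n → ℝ} (hf : Filter.Tendsto f Filter.atTop (𝓝 a)) :
    Filter.Tendsto (fun j => qf M (f j)) Filter.atTop (𝓝 (qf M a)) :=
  ((aux_cont_qf M).tendsto a).comp hf

lemma aux_tendsto_sqnorm {n : ℕ} {f : ℕ → Fin n → ℝ} {a : Fin n → ℝ}
    (hf : Filter.Tendsto f Filter.atTop (𝓝 a)) :
    Filter.Tendsto (fun j => sqnorm (f j)) Filter.atTop (𝓝 (sqnorm a)) :=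
  (aux_cont_sqnorm.tendsto a).comp hf

lemma aux_tendsto_qbase {n : ℕ} (q : ℕ) (A : ℕ → Matrix (Fin n) (Fin n) ℝ) (α γ ρ : ℝ)
    {f h : ℕ → Fin n → ℝ} {a c : Fin n → ℝ}
    (hf : Filter.Tendsto f Filter.atTop (𝓝 a))
    (hh : Filter.Tendsto h Filter.atTop (𝓝 c)) :
    Filter.Tendsto (fun j => aux_qbase q A α γ ρ (f j) (h j)) Filter.atTop
      (𝓝 (aux_qbase q A α γ ρ a c)) := by
  unfold aux_qbase
  exact ((tendsto_const_nhds.mul (aux_tendsto_qf (A 1) hf)).add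
    (tendsto_const_nhds.mul (tendsto_finset_sum _ fun i _ =>
      (aux_tendsto_qf (A i) hh).mul (aux_tendsto_qf (A i) hf)))).add
    (tendsto_const_nhds.mul (aux_tendsto_sqnorm (hf.sub hh)))

lemma aux_tendsto_qrho {n : ℕ} (q : ℕ) (A : ℕ → Matrix (Fin n) (Fin n) ℝ) (α γ ρ : ℝ)
    {f g h : ℕ → Fin n → ℝ} {a b c : Fin n → ℝ}
    (hf : Filter.Tendsto f Filter.atTop (𝓝 a))
    (hg : Filter.Tendsto g Filter.atTop (𝓝 b))
    (hh : Filter.Tendsto h Filter.atTop (𝓝 c)) :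
    Filter.Tendsto (fun j => qrho q A α γ ρ (f j) (g j) (h j)) Filter.atTop
      (𝓝 (qrho q A α γ ρ a b c)) := by
  simp only [aux_qrho_decomp]
  exact (aux_tendsto_qbase q A α γ ρ hf hh).add
    (tendsto_const_nhds.mul (aux_tendsto_sqnorm (hf.sub hg)))

set_option maxHeartbeats 1000000 in
theorem bcd_accumulation_point_is_saddle {n q k : ℕ} (hn : 1 ≤ n) (hq : 2 ≤ q)
    (A : ℕ → Matrix (Fin n) (Fin n) ℝ)
    (α γ ρ φ : ℝ) (hα : α = 0 ∨ α = 1) (hγ : 0 ≤ γ) (hρ : 0 < ρ) (hφ : 0 < φ)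
    (hA0 : (A 0).PosDef)
    (hk1 : 1 ≤ k) (hkn : k ≤ n)
    (x y z : ℕ → Fin n → ℝ)
    (hy0 : _root_.enorm (y 0) = 1 ∧ (Function.support (y 0)).ncard ≤ k)
    (hxmin : ∀ l : ℕ, φ ≤ qf (A 0) (x (l + 1)) ∧
      ∀ u : Fin n → ℝ, φ ≤ qf (A 0) u →
        qrho q A α γ ρ (x (l + 1)) (y l) (z l) ≤ qrho q A α γ ρ u (y l) (z l))
    (hymin : ∀ l : ℕ,
      (_root_.enorm (y (l + 1)) = 1 ∧ (Function.support (y (l + 1))).ncard ≤ k) ∧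
      ∀ v : Fin n → ℝ, _root_.enorm v = 1 → (Function.support v).ncard ≤ k →
        qrho q A α γ ρ (x (l + 1)) (y (l + 1)) (z l) ≤ qrho q A α γ ρ (x (l + 1)) v (z l))
    (hzmin : ∀ l : ℕ, ∀ w : Fin n → ℝ,
        qrho q A α γ ρ (x (l + 1)) (y (l + 1)) (z (l + 1)) ≤
          qrho q A α γ ρ (x (l + 1)) (y (l + 1)) w)
    (hApsd : ∀ i, 1 ≤ i → i ≤ q → (A i).PosSemidef)
    (σ : ℕ → ℕ) (hσ : StrictMono σ) (hσ1 : ∀ j, 1 ≤ σ j)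
    (xs ys zs : Fin n → ℝ)
    (hxs : Filter.Tendsto (fun j => x (σ j)) Filter.atTop (𝓝 xs))
    (hys : Filter.Tendsto (fun j => y (σ j)) Filter.atTop (𝓝 ys))
    (hzs : Filter.Tendsto (fun j => z (σ j)) Filter.atTop (𝓝 zs)) :
    (φ ≤ qf (A 0) xs ∧
      ∀ u : Fin n → ℝ, φ ≤ qf (A 0) u →
        qrho q A α γ ρ xs ys zs ≤ qrho q A α γ ρ u ys zs) ∧
    ((_root_.enorm ys = 1 ∧ (Function.support ys).ncard ≤ k) ∧
      ∀ v : Fin n → ℝ, _root_.enorm v = 1 → (Function.support v).ncard ≤ k →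
        qrho q A α γ ρ xs ys zs ≤ qrho q A α γ ρ xs v zs) ∧
    (∀ w : Fin n → ℝ, qrho q A α γ ρ xs ys zs ≤ qrho q A α γ ρ xs ys w) := by
  classical
  set F := qrho q A α γ ρ with hF
  -- basic nonnegativity facts
  have hα0 : 0 ≤ α := by rcases hα with h | h <;> simp [h]
  have hqf1 : ∀ v : Fin n → ℝ, 0 ≤ qf (A 1) v :=
    fun v => aux_qf_nonneg (hApsd 1 le_rfl (by omega)) v
  have hqfi : ∀ i ∈ Finset.Icc 2 q, ∀ v : Fin n → ℝ, 0 ≤ qf (A i) v := by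
    intro i hi v
    rw [Finset.mem_Icc] at hi
    exact aux_qf_nonneg (hApsd i (by omega) hi.2) v
  have Fnonneg : ∀ a b c : Fin n → ℝ, 0 ≤ F a b c := by
    intro a b c
    have h1 : 0 ≤ γ * ∑ i ∈ Finset.Icc 2 q, qf (A i) c * qf (A i) a :=
      mul_nonneg hγ (Finset.sum_nonneg fun i hi =>
        mul_nonneg (hqfi i hi c) (hqfi i hi a))
    have h2 : 0 ≤ ρ * (sqnorm (a - b) + sqnorm (a - c)) :=
      mul_nonneg hρ.le (add_nonneg (aux_sqnorm_nonneg _) (aux_sqnorm_nonneg _))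
    have h3 : 0 ≤ α * qf (A 1) a := mul_nonneg hα0 (hqf1 a)
    simp only [hF, qrho]
    linarith
  -- all y l lie in Y
  have yY : ∀ l : ℕ, _root_.enorm (y l) = 1 ∧ (Function.support (y l)).ncard ≤ k := by
    intro l
    cases l with
    | zero => exact hy0
    | succ m => exact (hymin m).1
  -- the objective value sequence
  set g : ℕ → ℝ := fun l => F (x (l + 1)) (y (l + 1)) (z (l + 1)) with hg
  have gant : Antitone g := by
    apply antitone_nat_of_succ_le
    intro l
    have h1 := hzmin (l + 1) (z (l + 1))
    have h2 := (hymin (l + 1)).2 (y (l + 1)) (yY (l + 1)).1 (yY (l + 1)).2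
    have h3 := (hxmin (l + 1)).2 (x (l + 1)) (hxmin l).1
    simp only [hg, hF] at h1 h2 h3 ⊢
    linarith
  have gbdd : BddBelow (Set.range g) := by
    refine ⟨0, ?_⟩
    rintro r ⟨l, rfl⟩
    exact Fnonneg _ _ _
  set L : ℝ := ⨅ l, g l with hL
  have hgL : Tendsto g atTop (𝓝 L) := tendsto_atTop_ciInf gant gbdd
  have hσtop : Tendsto σ atTop atTop := hσ.tendsto_atTop
  have hσ1top : Tendsto (fun j => σ j - 1) atTop atTop :=
    (tendsto_sub_atTop_nat 1).comp hσtop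
  have hσeq : ∀ j, σ j - 1 + 1 = σ j := fun j => Nat.succ_pred_eq_of_pos (hσ1 j)
  have hgσ : Tendsto (fun j => g (σ j)) atTop (𝓝 L) := hgL.comp hσtop
  have hgσ1 : Tendsto (fun j => g (σ j - 1)) atTop (𝓝 L) := hgL.comp hσ1top
  -- subsequence objective values converge to F xs ys zs
  have hFσ : Tendsto (fun j => F (x (σ j)) (y (σ j)) (z (σ j))) atTop
      (𝓝 (F xs ys zs)) :=
    aux_tendsto_qrho q A α γ ρ hxs hys hzs
  have hgeq : (fun j => g (σ j - 1)) = fun j => F (x (σ j)) (y (σ j)) (z (σ j)) := by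
    funext j
    simp only [hg, hσeq j]
  have hLeq : L = F xs ys zs := by
    apply tendsto_nhds_unique (hgσ1) (by rw [hgeq]; exact hFσ)
  -- x* lies in X
  have hxsX : φ ≤ qf (A 0) xs := by
    refine ge_of_tendsto' (aux_tendsto_qf (A 0) hxs) fun j => ?_
    have := (hxmin (σ j - 1)).1
    rwa [hσeq j] at this
  -- x-part minimality
  have hxpart : ∀ u : Fin n → ℝ, φ ≤ qf (A 0) u → F xs ys zs ≤ F u ys zs := by
    intro u hu
    set h : ℕ → ℝ := fun j => F (x (σ j + 1)) (y (σ j)) (z (σ j)) with hh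
    have hlow : ∀ j, g (σ j) ≤ h j := by
      intro j
      have h1 := hzmin (σ j) (z (σ j))
      have h2 := (hymin (σ j)).2 (y (σ j)) (yY (σ j)).1 (yY (σ j)).2
      simp only [hg, hh, hF] at h1 h2 ⊢
      linarith
    have hup : ∀ j, h j ≤ g (σ j - 1) := by
      intro j
      have hx1 : φ ≤ qf (A 0) (x (σ j)) := by
        have := (hxmin (σ j - 1)).1; rwa [hσeq j] at this
      have := (hxmin (σ j)).2 (x (σ j)) hx1
      simp only [hg, hh, hF, hσeq j] at this ⊢
      linarith
    have hhL : Tendsto h atTop (𝓝 L) :=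
      tendsto_of_tendsto_of_tendsto_of_le_of_le hgσ hgσ1 hlow hup
    have hFu : Tendsto (fun j => F u (y (σ j)) (z (σ j))) atTop (𝓝 (F u ys zs)) :=
      aux_tendsto_qrho q A α γ ρ tendsto_const_nhds hys hzs
    rw [← hLeq]
    exact le_of_tendsto_of_tendsto' hhL hFu fun j => (hxmin (σ j)).2 u hu
  -- y* lies in Y
  have hysnorm : _root_.enorm ys = 1 := by
    have h1 : Tendsto (fun j => _root_.enorm (y (σ j))) atTop (𝓝 (_root_.enorm ys)) :=
      (Real.continuous_sqrt.tendsto _).comp (aux_tendsto_sqnorm hys)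
    have h2 : (fun j => _root_.enorm (y (σ j))) = fun _ => (1 : ℝ) := by
      funext j
      have := (yY (σ j)).1
      simpa using this
    rw [h2] at h1
    exact tendsto_nhds_unique h1 tendsto_const_nhds
  have hyscard : (Function.support ys).ncard ≤ k := by
    have hev : ∀ᶠ j in atTop, ∀ i ∈ Function.support ys, y (σ j) i ≠ 0 := by
      rw [eventually_all_finite (Set.toFinite _)]
      intro i hi
      have ht : Tendsto (fun j => y (σ j) i) atTop (𝓝 (ys i)) :=
        ((continuous_apply i).tendsto ys).comp hys
      exact ht.eventually_ne hi
    obtain ⟨j, hj⟩ := hev.exists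
    have hsub : Function.support ys ⊆ Function.support (y (σ j)) :=
      fun i hi => hj i hi
    calc (Function.support ys).ncard
        ≤ (Function.support (y (σ j))).ncard :=
          Set.ncard_le_ncard hsub (Set.toFinite _)
      _ ≤ k := (yY (σ j)).2
  -- y-part minimality
  have hypart : ∀ v : Fin n → ℝ, _root_.enorm v = 1 → (Function.support v).ncard ≤ k →
      F xs ys zs ≤ F xs v zs := by
    intro v hv1 hv2
    have step1 : ∀ j, sqnorm (x (σ j) - y (σ j)) ≤ sqnorm (x (σ j) - v) := by
      intro j
      have h1 := (hymin (σ j - 1)).2 v hv1 hv2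
      rw [hσeq j] at h1
      rw [hF, aux_qrho_decomp, aux_qrho_decomp] at h1
      have h2 : ρ * sqnorm (x (σ j) - y (σ j)) ≤ ρ * sqnorm (x (σ j) - v) := by
        linarith
      exact le_of_mul_le_mul_left h2 hρ
    have step2 : sqnorm (xs - ys) ≤ sqnorm (xs - v) := by
      have t1 : Tendsto (fun j => sqnorm (x (σ j) - y (σ j))) atTop
          (𝓝 (sqnorm (xs - ys))) := aux_tendsto_sqnorm (hxs.sub hys)
      have t2 : Tendsto (fun j => sqnorm (x (σ j) - v)) atTop
          (𝓝 (sqnorm (xs - v))) :=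
        aux_tendsto_sqnorm (hxs.sub tendsto_const_nhds)
      exact le_of_tendsto_of_tendsto' t1 t2 step1
    simp only [hF]
    rw [aux_qrho_decomp, aux_qrho_decomp]
    exact add_le_add_right (mul_le_mul_of_nonneg_left step2 hρ.le) _
  -- z-part minimality
  have hzpart : ∀ w : Fin n → ℝ, F xs ys zs ≤ F xs ys w := by
    intro w
    have step1 : ∀ j, aux_qbase q A α γ ρ (x (σ j)) (z (σ j)) ≤
        aux_qbase q A α γ ρ (x (σ j)) w := by
      intro j
      have h1 := hzmin (σ j - 1) w
      rw [hσeq j] at h1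
      rw [hF, aux_qrho_decomp, aux_qrho_decomp] at h1
      linarith
    have step2 : aux_qbase q A α γ ρ xs zs ≤ aux_qbase q A α γ ρ xs w := by
      have t1 : Tendsto (fun j => aux_qbase q A α γ ρ (x (σ j)) (z (σ j))) atTop
          (𝓝 (aux_qbase q A α γ ρ xs zs)) :=
        aux_tendsto_qbase q A α γ ρ hxs hzs
      have t2 : Tendsto (fun j => aux_qbase q A α γ ρ (x (σ j)) w) atTop
          (𝓝 (aux_qbase q A α γ ρ xs w)) :=
        aux_tendsto_qbase q A α γ ρ hxs tendsto_const_nhds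
      exact le_of_tendsto_of_tendsto' t1 t2 step1
    simp only [hF]
    rw [aux_qrho_decomp, aux_qrho_decomp]
    exact add_le_add_left step2 _
  exact ⟨⟨hxsX, hxpart⟩, ⟨⟨hysnorm, hyscard⟩, hypart⟩, hzpart⟩
end

section
/- Let q ≥ 2, α ∈ {0,1}, γ ≥ 0, Υ > 0, 1 ≤ k ≤ n, and let A₁, …, A_q be real symmetric positive semidefinite n×n matrices. Let (ρ_j)_{j ≥ 0} be a sequence of positive reals with ρ_j → ∞, and let (x_j, y_j, z_j)_{j ≥ 0} be sequences in ℝ^n with ‖y_j‖ = 1 and ‖y_j‖₀ ≤ k for all j, and q_{ρ_j}(x_j, y_j, z_j) ≤ Υ for all j. Then there exist a strictly increasing map σ : ℕ → ℕ, a point x* ∈ ℝ^n, and an index set L ⊆ {1,…,n} with |L| = k such that x_{σ(j)} → x*, y_{σ(j)} → x*, z_{σ(j)} → x*, ‖x*‖ = 1, and x*_i = 0 for all i ∉ L. -/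
open Matrix Finset Filter Topology

/-- Euclidean norm on `ℝ^n`. -/
noncomputable def eucNorm {n : ℕ} (x : Fin n → ℝ) : ℝ := Real.sqrt (sqnorm x)

lemma sqnorm_nonneg' {n : ℕ} (v : Fin n → ℝ) : 0 ≤ sqnorm v :=
  Finset.sum_nonneg fun _ _ => sq_nonneg _

lemma coord_sq_le_sqnorm {n : ℕ} (v : Fin n → ℝ) (i : Fin n) : v i ^ 2 ≤ sqnorm v :=
  Finset.single_le_sum (f := fun i => v i ^ 2) (fun _ _ => sq_nonneg _) (Finset.mem_univ i)

lemma abs_coord_le {n : ℕ} (v : Fin n → ℝ) (i : Fin n) : |v i| ≤ Real.sqrt (sqnorm v) := by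
  rw [← Real.sqrt_sq_eq_abs]
  exact Real.sqrt_le_sqrt (coord_sq_le_sqnorm v i)

lemma continuous_enorm' {n : ℕ} : Continuous (eucNorm : (Fin n → ℝ) → ℝ) := by
  unfold eucNorm sqnorm
  exact Real.continuous_sqrt.comp (continuous_finset_sum _ fun i _ => (continuous_apply i).pow 2)

theorem penalty_sequence_accumulation {n q k : ℕ} (hq : 2 ≤ q)
    (A : ℕ → Matrix (Fin n) (Fin n) ℝ)
    (α γ Υ : ℝ) (hα : α = 0 ∨ α = 1) (hγ : 0 ≤ γ) (hΥ : 0 < Υ)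
    (hk1 : 1 ≤ k) (hkn : k ≤ n)
    (hApsd : ∀ i, 1 ≤ i → i ≤ q → (A i).PosSemidef)
    (ρ : ℕ → ℝ) (hρpos : ∀ j, 0 < ρ j)
    (hρ : Filter.Tendsto ρ Filter.atTop Filter.atTop)
    (x y z : ℕ → Fin n → ℝ)
    (hy : ∀ j, eucNorm (y j) = 1 ∧ (Function.support (y j)).ncard ≤ k)
    (hbound : ∀ j, qrho q A α γ (ρ j) (x j) (y j) (z j) ≤ Υ) :
    ∃ (σ : ℕ → ℕ) (xs : Fin n → ℝ) (L : Finset (Fin n)),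
      StrictMono σ ∧ L.card = k ∧
      Filter.Tendsto (fun j => x (σ j)) Filter.atTop (𝓝 xs) ∧
      Filter.Tendsto (fun j => y (σ j)) Filter.atTop (𝓝 xs) ∧
      Filter.Tendsto (fun j => z (σ j)) Filter.atTop (𝓝 xs) ∧
      eucNorm xs = 1 ∧ ∀ i ∉ L, xs i = 0 := by
  classical
  have hαnn : 0 ≤ α := by rcases hα with h | h <;> simp [h]
  have hqf : ∀ i, 1 ≤ i → i ≤ q → ∀ v : Fin n → ℝ, 0 ≤ qf (A i) v := by
    intro i h1 h2 v
    have := (hApsd i h1 h2).dotProduct_mulVec_nonneg v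
    simpa [qf] using this
  -- the key penalty bound
  have key : ∀ j, sqnorm (x j - y j) ≤ Υ / ρ j ∧ sqnorm (x j - z j) ≤ Υ / ρ j := by
    intro j
    have hb := hbound j
    have h1 : 0 ≤ α * qf (A 1) (x j) :=
      mul_nonneg hαnn (hqf 1 le_rfl (le_trans one_le_two hq) _)
    have h2 : 0 ≤ γ * ∑ i ∈ Finset.Icc 2 q, qf (A i) (z j) * qf (A i) (x j) := by
      refine mul_nonneg hγ (Finset.sum_nonneg fun i hi => ?_)
      rw [Finset.mem_Icc] at hi
      exact mul_nonneg (hqf i (le_trans one_le_two hi.1) hi.2 _)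
        (hqf i (le_trans one_le_two hi.1) hi.2 _)
    have h3 : ρ j * (sqnorm (x j - y j) + sqnorm (x j - z j)) ≤ Υ := by
      unfold qrho at hb; linarith
    have h4 : sqnorm (x j - y j) + sqnorm (x j - z j) ≤ Υ / ρ j := by
      rw [le_div_iff₀ (hρpos j)]; linarith
    have h5 := sqnorm_nonneg' (x j - y j)
    have h6 := sqnorm_nonneg' (x j - z j)
    constructor <;> linarith
  -- pigeonhole: a constant-support infinite subfamily
  set supp : ℕ → Finset (Fin n) := fun j => Finset.univ.filter (fun i => y j i ≠ 0) with hsuppdef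
  have hsuppcard : ∀ j, (supp j).card ≤ k := by
    intro j
    have h := (hy j).2
    have hs : Function.support (y j) = ↑(supp j) := by
      ext i; simp [hsuppdef, Function.mem_support]
    rwa [hs, Set.ncard_coe_finset] at h
  obtain ⟨S, hS⟩ := Finite.exists_infinite_fiber supp
  haveI := hS
  set e : ℕ ↪o ℕ := Nat.orderEmbeddingOfSet (supp ⁻¹' {S}) with hedef
  have he : ∀ m, supp (e m) = S := by
    intro m
    have : e m ∈ supp ⁻¹' {S} := by
      rw [← Nat.orderEmbeddingOfSet_range (supp ⁻¹' {S})]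
      exact Set.mem_range_self m
    simpa using this
  -- compactness: extract a convergent subsequence of `y ∘ e`
  have hsq1 : ∀ j, sqnorm (y j) = 1 := by
    intro j
    have h := (hy j).1
    rwa [eucNorm, Real.sqrt_eq_one] at h
  have hmem : ∀ m, y (e m) ∈ Metric.closedBall (0 : Fin n → ℝ) 1 := by
    intro m
    rw [Metric.mem_closedBall, dist_zero_right]
    refine (pi_norm_le_iff_of_nonneg zero_le_one).2 fun i => ?_
    have := abs_coord_le (y (e m)) i
    rw [hsq1 (e m), Real.sqrt_one] at this
    simpa [Real.norm_eq_abs] using this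
  obtain ⟨xs, -, σ₂, hσ₂, hyconv⟩ :=
    tendsto_subseq_of_bounded Metric.isBounded_closedBall hmem
  set σ : ℕ → ℕ := fun j => e (σ₂ j) with hσdef
  have hσmono : StrictMono σ := e.strictMono.comp hσ₂
  have hy_conv : Tendsto (fun j => y (σ j)) atTop (𝓝 xs) := hyconv
  have hylim : ∀ i, Tendsto (fun j => y (σ j) i) atTop (𝓝 (xs i)) := fun i =>
    ((continuous_apply i).tendsto xs).comp hy_conv
  -- the penalty bound along the subsequence tends to 0
  have hρσ : Tendsto (fun j => ρ (σ j)) atTop atTop := hρ.comp hσmono.tendsto_atTop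
  have hU0 : Tendsto (fun j => Υ / ρ (σ j)) atTop (𝓝 0) :=
    Tendsto.div_atTop tendsto_const_nhds hρσ
  have hUs : Tendsto (fun j => Real.sqrt (Υ / ρ (σ j))) atTop (𝓝 0) := by
    have := (Real.continuous_sqrt.tendsto 0).comp hU0
    simpa [Function.comp_def] using this
  have hdx : ∀ i, Tendsto (fun j => x (σ j) i - y (σ j) i) atTop (𝓝 0) := by
    intro i
    refine squeeze_zero_norm (fun j => ?_) hUs
    have h1 := abs_coord_le (x (σ j) - y (σ j)) i
    have h2 : Real.sqrt (sqnorm (x (σ j) - y (σ j))) ≤ Real.sqrt (Υ / ρ (σ j)) :=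
      Real.sqrt_le_sqrt (key (σ j)).1
    simpa [Real.norm_eq_abs, Pi.sub_apply] using h1.trans h2
  have hdz : ∀ i, Tendsto (fun j => x (σ j) i - z (σ j) i) atTop (𝓝 0) := by
    intro i
    refine squeeze_zero_norm (fun j => ?_) hUs
    have h1 := abs_coord_le (x (σ j) - z (σ j)) i
    have h2' : Real.sqrt (sqnorm (x (σ j) - z (σ j))) ≤ Real.sqrt (Υ / ρ (σ j)) :=
      Real.sqrt_le_sqrt (key (σ j)).2
    simpa [Real.norm_eq_abs, Pi.sub_apply] using h1.trans h2'
  have hx_conv : Tendsto (fun j => x (σ j)) atTop (𝓝 xs) := by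
    rw [tendsto_pi_nhds]
    intro i
    have := (hylim i).add (hdx i)
    simpa using this.congr fun j => by ring
  have hxlim : ∀ i, Tendsto (fun j => x (σ j) i) atTop (𝓝 (xs i)) := fun i =>
    ((continuous_apply i).tendsto xs).comp hx_conv
  have hz_conv : Tendsto (fun j => z (σ j)) atTop (𝓝 xs) := by
    rw [tendsto_pi_nhds]
    intro i
    have := (hxlim i).sub (hdz i)
    simpa using this.congr fun j => by ring
  -- the index set
  have hScard : S.card ≤ k := by rw [← he 0]; exact hsuppcard (e 0)
  obtain ⟨L, hSL, -, hLcard⟩ :=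
    Finset.exists_subsuperset_card_eq (Finset.subset_univ S) hScard (by simpa using hkn)
  refine ⟨σ, xs, L, hσmono, hLcard, hx_conv, hy_conv, hz_conv, ?_, ?_⟩
  · -- unit norm of the limit
    have h1 : Tendsto (fun j => eucNorm (y (σ j))) atTop (𝓝 (eucNorm xs)) :=
      (continuous_enorm'.tendsto xs).comp hy_conv
    have h2 : Tendsto (fun j => eucNorm (y (σ j))) atTop (𝓝 1) := by
      simpa [(hy _).1] using (tendsto_const_nhds : Tendsto (fun _ : ℕ => (1 : ℝ)) atTop (𝓝 1))
    exact tendsto_nhds_unique h1 h2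
  · intro i hiL
    have hiS : i ∉ S := fun h => hiL (hSL h)
    have hz0 : ∀ j, y (σ j) i = 0 := by
      intro j
      by_contra h
      exact hiS (by rw [← he (σ₂ j)]; simp [hsuppdef, h]; exact h)
    have : Tendsto (fun j => y (σ j) i) atTop (𝓝 0) := by
      simpa [hz0] using (tendsto_const_nhds : Tendsto (fun _ : ℕ => (0 : ℝ)) atTop (𝓝 0))
    exact tendsto_nhds_unique (hylim i) this
end
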